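/- Let p be a prime, let A_1, …, A_k be finite abelian p-groups, and let q be a power of p. Let φ : pA_1 × A_2 × ⋯ × A_k → ℤ/qℤ be a multilinear map such that φ(x) = 0 whenever p·x_i = 0 for some i ∈ {2,…,k}. Then there exists a multilinear map ψ : A_1 × A_2 × ⋯ × A_k → ℤ/(pq)ℤ such that for all (y, x_2, …, x_k) ∈ pA_1 × A_2 × ⋯ × A_k one has ψ(y, x_2, …, x_k) = ι(φ(y, x_2, …, x_k)), where ι : ℤ/qℤ → ℤ/(pq)ℤ is the injective additive map identifying ℤ/qℤ with the subgroup p·(ℤ/(pq)ℤ), i.e. ι(a mod q) = pa mod pq. -/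

import Mathlib

/-- A map of (dependent) products of abelian groups is multiadditive (multilinear over ℤ)
if it is additive in each coordinate separately. -/
def IsMultiadditive {ι : Type} [DecidableEq ι] {A : ι → Type} [∀ i, AddCommGroup (A i)]
    {B : Type} [AddCommMonoid B] (φ : (∀ i, A i) → B) : Prop :=
  ∀ (i : ι) (x : ∀ j, A j) (a b : A i),
    φ (Function.update x i (a + b)) = φ (Function.update x i a) + φ (Function.update x i b)

/-- The multiplication-by-`p` endomorphism of an abelian group. -/
def smulHom (p : ℕ) (A : Type) [AddCommGroup A] : A →+ A :=
  AddMonoidHom.mk' (fun a => p • a) (fun a b => smul_add p a b)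

/-- The subgroup `pA = {pa : a ∈ A}` of an abelian group `A`. -/
def pSub (p : ℕ) (A : Type) [AddCommGroup A] : AddSubgroup A := (smulHom p A).range

/-- The family of groups `X, A_1, …, A_k`, indexed by `Option (Fin k)` (with `X` in
position `none`). -/
def optFam (X : Type) {k : ℕ} (A : Fin k → Type) : Option (Fin k) → Type :=
  fun o => o.elim X A

instance optFam.instAddCommGroup (X : Type) {k : ℕ} (A : Fin k → Type) [AddCommGroup X]
    [∀ i, AddCommGroup (A i)] (o : Option (Fin k)) : AddCommGroup (optFam X A o) :=
  match o with
  | none => inferInstanceAs (AddCommGroup X)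
  | some i => inferInstanceAs (AddCommGroup (A i))

instance optFam.instFintype (X : Type) {k : ℕ} (A : Fin k → Type) [Fintype X]
    [∀ i, Fintype (A i)] (o : Option (Fin k)) : Fintype (optFam X A o) :=
  match o with
  | none => inferInstanceAs (Fintype X)
  | some i => inferInstanceAs (Fintype (A i))

/-- The inclusion of `pA₀ × A_1 × ⋯ × A_k` into `A₀ × A_1 × ⋯ × A_k`. -/
def embOpt (p : ℕ) (A₀ : Type) [AddCommGroup A₀] {k : ℕ} (A : Fin k → Type)
    (x : ∀ o, optFam (↥(pSub p A₀)) A o) : ∀ o, optFam A₀ A o :=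
  fun o => match o with
  | none => (pSub p A₀).subtype (x none)
  | some i => x (some i)

lemma cast_mul_mod (p e a : ℕ) :
    ((p * (a % p ^ e) : ℕ) : ZMod (p ^ (e + 1))) = ((p * a : ℕ) : ZMod (p ^ (e + 1))) := by
  rw [ZMod.natCast_eq_natCast_iff]
  have h := (Nat.mod_modEq a (p ^ e)).mul_left' p
  rwa [← pow_succ'] at h

lemma nsmul_zmod_eq {n : ℕ} [NeZero n] (p : ℕ) (c : ZMod n) :
    p • c = ((p * c.val : ℕ) : ZMod n) := by
  rw [nsmul_eq_mul, Nat.cast_mul, ZMod.natCast_val, ZMod.cast_id]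

def redHom (p e : ℕ) : ZMod (p ^ (e + 1)) →+ ZMod (p ^ e) :=
  (ZMod.castHom (pow_dvd_pow p (Nat.le_succ e)) (ZMod (p ^ e))).toAddMonoidHom

lemma redHom_apply {p e : ℕ} [NeZero (p ^ (e + 1))] (c : ZMod (p ^ (e + 1))) :
    redHom p e c = ((c.val : ℕ) : ZMod (p ^ e)) := by
  rw [ZMod.natCast_val]
  rfl

lemma red_smul {p : ℕ} (hp : p.Prime) {e : ℕ} (c : ZMod (p ^ (e + 1))) (d : ZMod (p ^ e))
    (h : redHom p e c = d) : p • c = ((p * d.val : ℕ) : ZMod (p ^ (e + 1))) := by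
  haveI : NeZero (p ^ (e + 1)) := ⟨pow_ne_zero _ hp.ne_zero⟩
  haveI : NeZero (p ^ e) := ⟨pow_ne_zero _ hp.ne_zero⟩
  subst h
  rw [redHom_apply, ZMod.val_natCast, cast_mul_mod, nsmul_zmod_eq]

lemma red_ker {p : ℕ} (hp : p.Prime) {e : ℕ} (c : ZMod (p ^ (e + 1)))
    (h : redHom p e c = 0) : p • c = 0 := by
  haveI : NeZero (p ^ e) := ⟨pow_ne_zero _ hp.ne_zero⟩
  have h2 := red_smul hp c 0 h
  rwa [ZMod.val_zero, Nat.mul_zero, Nat.cast_zero] at h2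

lemma iota_add {p : ℕ} (hp : p.Prime) {e : ℕ} (d₁ d₂ : ZMod (p ^ e)) :
    ((p * (d₁ + d₂).val : ℕ) : ZMod (p ^ (e + 1))) =
      ((p * d₁.val : ℕ) : ZMod (p ^ (e + 1))) + ((p * d₂.val : ℕ) : ZMod (p ^ (e + 1))) := by
  haveI : NeZero (p ^ e) := ⟨pow_ne_zero _ hp.ne_zero⟩
  rw [ZMod.val_add, cast_mul_mod]
  push_cast
  ring

lemma zmodHom_ext {n : ℕ} {M : Type} [AddCommGroup M] {f g : ZMod n →+ M} (h : f 1 = g 1) :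
    f = g := by
  ext x
  obtain ⟨t, rfl⟩ := ZMod.intCast_surjective x
  rw [show ((t : ZMod n)) = t • (1 : ZMod n) from (zsmul_one t).symm, map_zsmul, map_zsmul, h]

lemma key_lift {G N N' : Type} [AddCommGroup G] [Finite G] [AddCommGroup N] [AddCommGroup N']
    {p : ℕ} (hp : p.Prime) (hG : ∀ g : G, ∃ m : ℕ, p ^ m • g = 0)
    (π : N' →+ N) (hker : ∀ x : N', π x = 0 → p • x = 0)
    (h : G →+ N) (hlift : ∀ g : G, ∃ n', π n' = h g)
    (htor : ∀ g : G, p • g = 0 → h g = 0) :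
    ∃ H : G →+ N', π.comp H = h := by
  classical
  obtain ⟨κ, hκ, n, hn, ⟨E⟩⟩ := AddCommGroup.equiv_directSum_zmod_of_finite' G
  set g : κ → G := fun i => E.symm (DirectSum.of (fun i => ZMod (n i)) i 1) with hg
  -- each n i is a positive power of p
  have hpow : ∀ i, ∃ m : ℕ, 0 < m ∧ n i = p ^ m := by
    intro i
    obtain ⟨M, hM⟩ := hG (g i)
    have h1 : p ^ M • (1 : ZMod (n i)) = 0 := by
      have h2 : E (p ^ M • g i) = E 0 := by rw [hM]
      rw [map_nsmul, map_zero, hg] at h2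
      simp only [AddEquiv.apply_symm_apply] at h2
      have h3 := congrArg (fun z => z i) h2
      simpa only [← map_nsmul, DirectSum.of_eq_same, DirectSum.zero_apply] using h3
    have hdvd : n i ∣ p ^ M := by
      have := addOrderOf_dvd_of_nsmul_eq_zero h1
      rwa [ZMod.addOrderOf_one] at this
    obtain ⟨m, _, hm⟩ := (Nat.dvd_prime_pow hp).mp hdvd
    refine ⟨m, ?_, hm⟩
    rcases Nat.eq_zero_or_pos m with rfl | hmpos
    · exfalso; have := hn i; rw [hm, pow_zero] at this; omega
    · exact hmpos
  have horder : ∀ i, (n i) • g i = 0 := by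
    intro i
    rw [hg]
    have : (n i) • DirectSum.of (fun i => ZMod (n i)) i 1 =
        DirectSum.of (fun i => ZMod (n i)) i ((n i) • 1) := (map_nsmul _ _ _).symm
    rw [← map_nsmul, this]
    have : ((n i) • (1 : ZMod (n i))) = 0 := by
      rw [nsmul_eq_mul, mul_one, ZMod.natCast_self]
    rw [this, map_zero, map_zero]
  -- choose lifts of h (g i)
  choose n' hn' using fun i => hlift (g i)
  have hordn' : ∀ i, (n i) • n' i = 0 := by
    intro i
    obtain ⟨m, hm0, hm⟩ := hpow i
    have h1 : π (p ^ (m - 1) • n' i) = h (p ^ (m - 1) • g i) := by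
      rw [map_nsmul, map_nsmul, hn']
    have h2 : h (p ^ (m - 1) • g i) = 0 := by
      apply htor
      rw [← mul_nsmul]
      have hq : p ^ (m - 1) * p = p ^ m := by
        rw [← pow_succ]; congr 1; omega
      rw [hq, ← hm, horder]
    have h3 : p • (p ^ (m - 1) • n' i) = 0 := hker _ (by rw [h1, h2])
    rw [← mul_nsmul] at h3
    have hq : p ^ (m - 1) * p = p ^ m := by rw [← pow_succ]; congr 1; omega
    rwa [hq, ← hm] at h3
  -- build the hom on the direct sum
  have hzlift : ∀ i, ((zmultiplesHom N') (n' i)) ((n i : ℤ)) = 0 := by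
    intro i
    rw [zmultiplesHom_apply, natCast_zsmul]
    exact hordn' i
  let F : ∀ i, ZMod (n i) →+ N' := fun i => ZMod.lift (n i) ⟨(zmultiplesHom N') (n' i), hzlift i⟩
  have hF1 : ∀ i, F i 1 = n' i := by
    intro i
    have : (1 : ZMod (n i)) = ((1 : ℤ) : ZMod (n i)) := by norm_cast
    rw [this]
    show ZMod.lift (n i) ⟨(zmultiplesHom N') (n' i), hzlift i⟩ ((1 : ℤ) : ZMod (n i)) = n' i
    rw [ZMod.lift_coe]
    exact one_zsmul _
  let Hd : DirectSum κ (fun i => ZMod (n i)) →+ N' := DirectSum.toAddMonoid F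
  have hext : π.comp Hd = h.comp E.symm.toAddMonoidHom := by
    refine DirectSum.addHom_ext' fun i => zmodHom_ext ?_
    simp only [AddMonoidHom.comp_apply, AddEquiv.coe_toAddMonoidHom]
    rw [show Hd (DirectSum.of (fun i => ZMod (n i)) i 1) = F i 1 from
      DirectSum.toAddMonoid_of F i 1, hF1, hn']
  refine ⟨Hd.comp E.toAddMonoidHom, ?_⟩
  ext a
  have := DFunLike.congr_fun hext (E a)
  simpa only [AddMonoidHom.comp_apply, AddEquiv.coe_toAddMonoidHom,
    AddEquiv.symm_apply_apply] using this

lemma IsMultiadditive.compHom {ι : Type} [DecidableEq ι] {A : ι → Type} [∀ i, AddCommGroup (A i)]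
    {B C : Type} [AddCommMonoid B] [AddCommMonoid C] (g : B →+ C) {φ : (∀ i, A i) → B}
    (hφ : IsMultiadditive φ) : IsMultiadditive (fun x => g (φ x)) := by
  intro i x a b
  simp only [hφ i x a b, map_add]

lemma IsMultiadditive.update_zero {ι : Type} [DecidableEq ι] {A : ι → Type}
    [∀ i, AddCommGroup (A i)] {B : Type} [AddCommGroup B] {φ : (∀ i, A i) → B}
    (hφ : IsMultiadditive φ) (i : ι) (x : ∀ j, A j) : φ (Function.update x i 0) = 0 := by
  have h := hφ i x 0 0
  rw [add_zero] at h
  exact left_eq_add.mp h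

def multSub (ι : Type) [DecidableEq ι] (A : ι → Type) [∀ i, AddCommGroup (A i)]
    (B : Type) [AddCommGroup B] : AddSubgroup ((∀ i, A i) → B) where
  carrier := {φ | IsMultiadditive φ}
  zero_mem' := by intro i x a b; simp
  add_mem' := by
    intro φ ψ hφ hψ i x a b
    simp only [Pi.add_apply, hφ i x a b, hψ i x a b]
    abel
  neg_mem' := by
    intro φ hφ i x a b
    simp only [Pi.neg_apply, hφ i x a b]
    abel

lemma mem_multSub {ι : Type} [DecidableEq ι] {A : ι → Type} [∀ i, AddCommGroup (A i)]
    {B : Type} [AddCommGroup B] {φ : (∀ i, A i) → B} :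
    φ ∈ multSub ι A B ↔ IsMultiadditive φ := Iff.rfl

lemma lift_mult {p : ℕ} (hp : p.Prime) (e : ℕ) :
    ∀ (k : ℕ) (A : Fin k → Type) [instG : ∀ i, AddCommGroup (A i)] [instF : ∀ i, Fintype (A i)],
      (∀ i (a : A i), ∃ m : ℕ, p ^ m • a = 0) →
      ∀ (μ : (∀ i, A i) → ZMod (p ^ e)), IsMultiadditive μ →
      (∀ x, (∃ i, p • x i = 0) → μ x = 0) →
      ∃ ν : (∀ i, A i) → ZMod (p ^ (e + 1)),
        IsMultiadditive ν ∧ ∀ x, redHom p e (ν x) = μ x := by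
  intro k
  induction k with
  | zero =>
    intro A instG instF hA μ hμ hvan
    haveI : NeZero (p ^ e) := ⟨pow_ne_zero _ hp.ne_zero⟩
    haveI : NeZero (p ^ (e + 1)) := ⟨pow_ne_zero _ hp.ne_zero⟩
    refine ⟨fun x => ((μ x).val : ZMod (p ^ (e + 1))), fun i => i.elim0, fun x => ?_⟩
    rw [redHom_apply, ZMod.val_natCast,
      Nat.mod_eq_of_lt ((ZMod.val_lt _).trans_le (Nat.pow_le_pow_right hp.one_lt.le (Nat.le_succ e))),
      ZMod.natCast_val, ZMod.cast_id]
  | succ k IH =>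
    intro A instG instF hA μ hμ hvan
    haveI : NeZero (p ^ e) := ⟨pow_ne_zero _ hp.ne_zero⟩
    haveI : NeZero (p ^ (e + 1)) := ⟨pow_ne_zero _ hp.ne_zero⟩
    set B : Fin k → Type := fun i => A i.succ with hB
    let Ne' : AddSubgroup ((∀ i, B i) → ZMod (p ^ e)) := multSub (Fin k) B (ZMod (p ^ e))
    let Ns : AddSubgroup ((∀ i, B i) → ZMod (p ^ (e + 1))) := multSub (Fin k) B (ZMod (p ^ (e + 1)))
    have hmema : ∀ g : A 0, IsMultiadditive (fun x : ∀ i, B i => μ (Fin.cons g x)) := by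
      intro g i x b c
      simp only [Fin.cons_update]
      exact hμ i.succ (Fin.cons g x) b c
    have hvana : ∀ g : A 0, ∀ x : ∀ i, B i, (∃ i, p • x i = 0) →
        μ (Fin.cons g x) = 0 := by
      rintro g x ⟨i, hi⟩
      exact hvan (Fin.cons g x) ⟨i.succ, by rwa [Fin.cons_succ]⟩
    let π : ↥Ns →+ ↥Ne' := AddMonoidHom.mk'
      (fun ν => ⟨fun x => redHom p e (ν.1 x), (mem_multSub.mp ν.2).compHom (redHom p e)⟩)
      (fun ν ν' => Subtype.ext (funext fun x => by
        simp only [AddSubgroup.coe_add, Pi.add_apply, map_add]))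
    let h : A 0 →+ ↥Ne' := AddMonoidHom.mk'
      (fun g => ⟨fun x => μ (Fin.cons g x), hmema g⟩)
      (fun g g' => Subtype.ext (funext fun x => by
        have h0 := hμ 0 (Fin.cons g x) g g'
        simp only [Fin.update_cons_zero] at h0
        simpa using h0))
    have hker : ∀ ν : ↥Ns, π ν = 0 → p • ν = 0 := by
      intro ν hν
      have h1 := congrArg Subtype.val hν
      refine Subtype.ext ?_
      have h2 : ((p • ν : ↥Ns) : (∀ i, B i) → ZMod (p ^ (e + 1))) = p • (ν : (∀ i, B i) → ZMod (p ^ (e + 1))) :=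
        map_nsmul Ns.subtype p ν
      rw [h2]
      funext x
      have h3 : redHom p e (ν.1 x) = 0 := by
        have := congrFun h1 x
        simp at this
        exact this
      have h4 := red_ker hp (ν.1 x) h3
      simpa using h4
    have hlift' : ∀ g : A 0, ∃ n' : ↥Ns, π n' = h g := by
      intro g
      obtain ⟨ν, hν1, hν2⟩ := IH B (fun i a => hA i.succ a)
        (fun x => μ (Fin.cons g x)) (hmema g) (hvana g)
      exact ⟨⟨ν, hν1⟩, Subtype.ext (funext fun x => hν2 x)⟩
    have htor' : ∀ g : A 0, p • g = 0 → h g = 0 := by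
      intro g hg
      refine Subtype.ext (funext fun x => ?_)
      have := hvan (Fin.cons g x) ⟨0, by rwa [Fin.cons_zero]⟩
      exact this
    obtain ⟨H, hH⟩ := key_lift hp (hA 0) π hker h hlift' htor'
    refine ⟨fun x => (H (x 0)).1 (Fin.tail x), ?_, ?_⟩
    · intro i
      refine Fin.cases ?_ ?_ i
      · intro x a b
        show (H (Function.update x 0 (a + b) 0)).1 (Fin.tail (Function.update x 0 (a + b))) = _
        simp only [Function.update_self, Fin.tail_update_zero, map_add,
          AddSubgroup.coe_add, Pi.add_apply]
      · intro j x a b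
        show (H (Function.update x j.succ (a + b) 0)).1 (Fin.tail (Function.update x j.succ (a + b))) = _
        simp only [Function.update_of_ne (Ne.symm (Fin.succ_ne_zero j)), Fin.tail_update_succ]
        exact (mem_multSub.mp (H (x 0)).2) j (Fin.tail x) a b
    · intro x
      have h1 := congrArg Subtype.val (DFunLike.congr_fun hH (x 0))
      have h2 := congrFun h1 (Fin.tail x)
      show redHom p e ((H (x 0)).1 (Fin.tail x)) = μ x
      rw [show μ x = μ (Fin.cons (x 0) (Fin.tail x)) by rw [Fin.cons_self_tail]]
      exact h2

def mkOpt {X : Type} {k : ℕ} {A : Fin k → Type} (y : X) (t : ∀ i, A i) :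
    ∀ o, optFam X A o
  | none => y
  | some i => t i

lemma mkOpt_update_some {X : Type} {k : ℕ} {A : Fin k → Type} (y : X) (t : ∀ i, A i)
    (i : Fin k) (c : A i) :
    mkOpt y (Function.update t i c) = Function.update (mkOpt (A := A) y t) (some i) c := by
  funext o
  cases o with
  | none =>
    erw [Function.update_of_ne (by simp)]
    rfl
  | some j =>
    show Function.update t i c j = Function.update (mkOpt y t) (some i) c (some j)
    rcases eq_or_ne j i with rfl | hne
    · erw [Function.update_self, Function.update_self]
    · erw [Function.update_of_ne hne,
        Function.update_of_ne (fun hc => hne (Option.some_injective _ hc))]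
      rfl

lemma update_mkOpt_none {X : Type} {k : ℕ} {A : Fin k → Type} (y z : X) (t : ∀ i, A i) :
    Function.update (mkOpt (A := A) y t) none z = mkOpt z t := by
  funext o
  cases o with
  | none =>
    erw [Function.update_self]
    rfl
  | some j =>
    erw [Function.update_of_ne (by simp)]
    rfl

lemma opt_tail_update_some {X : Type} {k : ℕ} {A : Fin k → Type} (x : ∀ o, optFam X A o)
    (j : Fin k) (c : A j) :
    (fun i => Function.update x (some j) c (some i)) = Function.update (fun i => x (some i)) j c := by
  funext i
  rcases eq_or_ne i j with rfl | hne
  · erw [Function.update_self, Function.update_self]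
  · erw [Function.update_of_ne (fun hc => hne (Option.some_injective _ hc)),
      Function.update_of_ne hne]

lemma opt_tail_update_none {X : Type} {k : ℕ} {A : Fin k → Type} (x : ∀ o, optFam X A o)
    (c : X) :
    (fun i => Function.update x none c (some i)) = fun i => x (some i) := by
  funext i
  erw [Function.update_of_ne (by simp)]

lemma mkOpt_self {X : Type} {k : ℕ} {A : Fin k → Type} (x : ∀ o, optFam X A o) :
    mkOpt (x none) (fun i => x (some i)) = x := by
  funext o
  cases o <;> rfl

/-- **Domain enlargement.** Let `A₀, A_1, …, A_k` be finite abelian `p`-groups and `q = p^e`.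
If `φ : pA₀ × A_1 × ⋯ × A_k → ℤ/q` is a multilinear map vanishing whenever some `x_i`
(`i ≥ 1`) is killed by `p`, then there is a multilinear map
`ψ : A₀ × A_1 × ⋯ × A_k → ℤ/pq` with `ψ(y, x) = ι(φ(y, x))` for `y ∈ pA₀`, where
`ι : ℤ/q → ℤ/pq` is the injective additive map `a mod q ↦ pa mod pq`. -/
theorem domain_enlargement (p : ℕ) (hp : p.Prime) (e k : ℕ)
    (A₀ : Type) [AddCommGroup A₀] [Fintype A₀] (hA₀ : ∀ a : A₀, ∃ m : ℕ, p ^ m • a = 0)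
    (A : Fin k → Type) [∀ i, AddCommGroup (A i)] [∀ i, Fintype (A i)]
    (hA : ∀ i (a : A i), ∃ m : ℕ, p ^ m • a = 0)
    (φ : (∀ o, optFam (↥(pSub p A₀)) A o) → ZMod (p ^ e))
    (hφ : IsMultiadditive φ)
    (hvan : ∀ x, (∃ i : Fin k, p • x (some i) = 0) → φ x = 0) :
    ∃ ψ : (∀ o, optFam A₀ A o) → ZMod (p ^ (e + 1)),
      IsMultiadditive ψ ∧
      ∀ x : ∀ o, optFam (↥(pSub p A₀)) A o,
        ψ (embOpt p A₀ A x) = ((p * (φ x).val : ℕ) : ZMod (p ^ (e + 1))) := by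
  classical
  haveI : NeZero (p ^ e) := ⟨pow_ne_zero _ hp.ne_zero⟩
  haveI : NeZero (p ^ (e + 1)) := ⟨pow_ne_zero _ hp.ne_zero⟩
  let Ns : AddSubgroup ((∀ i, A i) → ZMod (p ^ (e + 1))) := multSub (Fin k) A (ZMod (p ^ (e + 1)))
  have hmem : ∀ a : A₀, (p • a) ∈ pSub p A₀ := fun a => ⟨a, rfl⟩
  -- multiadditivity of the slices of φ
  have hμY : ∀ Y : ↥(pSub p A₀), IsMultiadditive (fun t : ∀ i, A i => φ (mkOpt Y t)) := by
    intro Y i t b c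
    simp only [mkOpt_update_some]
    exact hφ (some i) (mkOpt Y t) b c
  -- multiadditivity of the iota-composed slices
  have hmult : ∀ Y : ↥(pSub p A₀), IsMultiadditive
      (fun t : ∀ i, A i => ((p * (φ (mkOpt Y t)).val : ℕ) : ZMod (p ^ (e + 1)))) := by
    intro Y i t b c
    simp only [mkOpt_update_some]
    erw [hφ (some i) (mkOpt Y t) b c]
    exact iota_add hp _ _
  let h : A₀ →+ ↥Ns := AddMonoidHom.mk'
    (fun a => ⟨fun t => ((p * (φ (mkOpt ⟨p • a, hmem a⟩ t)).val : ℕ) : ZMod (p ^ (e + 1))),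
      hmult ⟨p • a, hmem a⟩⟩)
    (fun a b => Subtype.ext (funext fun t => by
      have e1 : (⟨p • (a + b), hmem (a + b)⟩ : ↥(pSub p A₀)) =
          ⟨p • a, hmem a⟩ + ⟨p • b, hmem b⟩ := Subtype.ext (smul_add p a b)
      have e2 := hφ none (mkOpt (⟨p • a, hmem a⟩ : ↥(pSub p A₀)) t)
        (⟨p • a, hmem a⟩ : ↥(pSub p A₀)) (⟨p • b, hmem b⟩ : ↥(pSub p A₀))
      rw [update_mkOpt_none, update_mkOpt_none] at e2; erw [update_mkOpt_none] at e2
      show ((p * (φ (mkOpt ⟨p • (a + b), hmem (a + b)⟩ t)).val : ℕ) : ZMod (p ^ (e + 1))) = _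
      erw [e1, e2]
      exact iota_add hp _ _))
  let π : ↥Ns →+ ↥Ns := AddMonoidHom.mk' (fun v => p • v) (fun v w => smul_add p v w)
  have hker : ∀ v : ↥Ns, π v = 0 → p • v = 0 := fun v hv => hv
  have hlift' : ∀ a : A₀, ∃ v : ↥Ns, π v = h a := by
    intro a
    obtain ⟨ν, hν1, hν2⟩ := lift_mult hp e k A hA
      (fun t => φ (mkOpt (⟨p • a, hmem a⟩ : ↥(pSub p A₀)) t)) (hμY _)
      (by rintro t ⟨i, hi⟩; exact hvan (mkOpt ⟨p • a, hmem a⟩ t) ⟨i, hi⟩)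
    refine ⟨⟨ν, hν1⟩, Subtype.ext ?_⟩
    have h2 : ((π ⟨ν, hν1⟩ : ↥Ns) : (∀ i, A i) → ZMod (p ^ (e + 1))) = p • ν := by
      show Ns.subtype (π ⟨ν, hν1⟩) = p • ν
      have h2a : π ⟨ν, hν1⟩ = p • (⟨ν, hν1⟩ : ↥Ns) := rfl
      rw [h2a, map_nsmul]
      rfl
    rw [h2]
    funext t
    rw [Pi.smul_apply]
    exact red_smul hp (ν t) _ (hν2 t)
  have htor' : ∀ a : A₀, p • a = 0 → h a = 0 := by
    intro a ha
    refine Subtype.ext (funext fun t => ?_)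
    show ((p * (φ (mkOpt ⟨p • a, hmem a⟩ t)).val : ℕ) : ZMod (p ^ (e + 1))) = _
    have e0 : (⟨p • a, hmem a⟩ : ↥(pSub p A₀)) = 0 := Subtype.ext ha
    have e1 : φ (mkOpt (0 : ↥(pSub p A₀)) t) = 0 := by
      have h5 := hφ.update_zero none (mkOpt (0 : ↥(pSub p A₀)) t)
      erw [update_mkOpt_none] at h5; exact h5
    rw [e0, e1, ZMod.val_zero, Nat.mul_zero, Nat.cast_zero]
    rfl
  obtain ⟨H, hH⟩ := key_lift hp hA₀ π hker h hlift' htor'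
  refine ⟨fun x => (H (x none)).1 (fun i => x (some i)), ?_, ?_⟩
  · intro i
    cases i with
    | none =>
      intro x a b
      show (H (Function.update x none (a + b) none)).1
          (fun i => Function.update x none (a + b) (some i)) = _
      erw [Function.update_self, opt_tail_update_none x (a + b), map_add]
      show (H a + H b).1 (fun i => x (some i)) =
        (H (Function.update x none a none)).1 (fun i => Function.update x none a (some i)) +
        (H (Function.update x none b none)).1 (fun i => Function.update x none b (some i))
      erw [Function.update_self, Function.update_self, opt_tail_update_none x a, opt_tail_update_none x b]
      rfl
    | some j =>
      intro x a b
      show (H (Function.update x (some j) (a + b) none)).1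
          (fun i => Function.update x (some j) (a + b) (some i)) = _
      erw [Function.update_of_ne (by simp), opt_tail_update_some]
      have hcur := (mem_multSub.mp (H (x none)).2) j (fun i => x (some i)) a b
      erw [hcur]
      show _ = (H (Function.update x (some j) a none)).1 (fun i => Function.update x (some j) a (some i)) +
        (H (Function.update x (some j) b none)).1 (fun i => Function.update x (some j) b (some i))
      erw [Function.update_of_ne (by simp),
        opt_tail_update_some x j a, opt_tail_update_some x j b]
      rfl
  · intro x
    obtain ⟨a, ha⟩ := (show ↥(pSub p A₀) from x none).2
    have ha' : p • a = (show ↥(pSub p A₀) from x none).1 := ha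
    show (H ((show ↥(pSub p A₀) from x none).1)).1 (fun i => x (some i)) = _
    rw [← ha']
    have h3 : H (p • a) = h a := by
      rw [map_nsmul]
      exact DFunLike.congr_fun hH a
    rw [h3]
    show ((p * (φ (mkOpt ⟨p • a, hmem a⟩ (fun i => x (some i)))).val : ℕ) : ZMod (p ^ (e + 1))) = _
    have h4 : (⟨p • a, hmem a⟩ : ↥(pSub p A₀)) = (show ↥(pSub p A₀) from x none) := Subtype.ext ha'
    erw [h4, mkOpt_self]
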